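/- Let Σ be a finite alphabet, b ∈ Σ, and let A^b denote the subspace of the free algebra spanned by the empty word and words not ending in x_b. Define reg^b on a word of the form w_b x_b^n (with w_b ∈ A^b) by reg^b(w_b x_b^n) = Σ_{j=0}^n (−1)^j (w_b x_b^{n−j}) ⧢ x_b^{⧢ j}. Then reg^b(w_b x_b^n) lies in A^b. -/

import Mathlib

/-- The shuffle product of two words, as a multiset of words. -/
def sh {α : Type*} : List α → List α → Multiset (List α)
  | [], w => {w}
  | u, [] => {u}
  | a :: u, b :: v => (sh u (b :: v)).map (a :: ·) + (sh (a :: u) v).map (b :: ·)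
termination_by u v => u.length + v.length

lemma sh_nil_right {α : Type*} (u : List α) : sh u [] = {u} := by cases u <;> simp [sh]

lemma sh_concat_aux {α : Type*} (a c : α) : ∀ (n : ℕ) (u v : List α), u.length + v.length ≤ n →
    sh (u ++ [a]) (v ++ [c]) =
      (sh u (v ++ [c])).map (· ++ [a]) + (sh (u ++ [a]) v).map (· ++ [c]) := by
  intro n
  induction n with
  | zero =>
    rintro u v h
    obtain ⟨rfl, rfl⟩ : u = [] ∧ v = [] := by
      constructor <;> (apply List.eq_nil_of_length_eq_zero; omega)
    simp [sh, sh_nil_right]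
    exact Multiset.cons_swap _ _ _
  | succ n ih =>
    rintro (_ | ⟨e, u'⟩) (_ | ⟨d, v'⟩) h
    · simp [sh, sh_nil_right]
      exact Multiset.cons_swap _ _ _
    · have h1 : ([] : List α).length + v'.length ≤ n := by simp at h ⊢; omega
      have H := ih [] v' h1
      simp only [List.nil_append, List.cons_append, sh, sh_nil_right] at H ⊢
      rw [H]
      simp [sh, sh_nil_right, Multiset.map_map, Function.comp]
      exact Multiset.cons_swap _ _ _
    · have h1 : u'.length + ([] : List α).length ≤ n := by simp at h ⊢; omega
      have H := ih u' [] h1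
      simp only [List.nil_append, List.cons_append, sh, sh_nil_right] at H ⊢
      rw [H]
      simp [sh, sh_nil_right, Multiset.map_map, Function.comp]
      rw [add_assoc, add_assoc, add_comm ({_} : Multiset (List _))]
    · have h1 : u'.length + (d :: v').length ≤ n := by simp at h ⊢; omega
      have h2 : (e :: u').length + v'.length ≤ n := by simp at h ⊢; omega
      have H1 := ih u' (d :: v') h1
      have H2 := ih (e :: u') v' h2
      simp only [List.nil_append, List.cons_append, sh] at H1 H2 ⊢
      rw [H1, H2]
      simp only [Multiset.map_add, Multiset.map_map, Function.comp, List.cons_append]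
      abel


lemma sh_concat {α : Type*} (u v : List α) (a c : α) :
    sh (u ++ [a]) (v ++ [c]) =
      (sh u (v ++ [c])).map (· ++ [a]) + (sh (u ++ [a]) v).map (· ++ [c]) :=
  sh_concat_aux a c _ u v le_rfl

lemma appendb_inj {α : Type*} (b : α) : Function.Injective (fun x : List α => x ++ [b]) := by
  intro x y h; simpa using h

lemma count_concat_map_ne {α : Type*} [DecidableEq α] {a b : α} (h : a ≠ b)
    (s : Multiset (List α)) (w : List α) :
    (s.map (· ++ [a])).count (w ++ [b]) = 0 := by
  rw [Multiset.count_eq_zero]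
  intro hm
  obtain ⟨x, -, hx⟩ := Multiset.mem_map.1 hm
  apply h
  have := congrArg List.getLast? hx
  simpa [List.getLast?_concat] using this

lemma count_key {α : Type*} [DecidableEq α] (b : α) (u : List α) (hu : u.getLast? ≠ some b)
    (m j : ℕ) (w : List α) :
    (sh (u ++ List.replicate m b) (List.replicate j b)).count (w ++ [b]) =
      (if m = 0 then 0 else
        (sh (u ++ List.replicate (m - 1) b) (List.replicate j b)).count w)
      + (if j = 0 then 0 else
        (sh (u ++ List.replicate m b) (List.replicate (j - 1) b)).count w) := by
  match m, j with
  | 0, 0 =>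
    simp only [List.replicate_zero, List.append_nil, sh_nil_right, eq_self_iff_true, if_true, add_zero]
    rw [Multiset.count_eq_zero]
    intro hm
    rw [Multiset.mem_singleton] at hm
    exact hu (by rw [← hm, List.getLast?_concat])
  | 0, j + 1 =>
    rw [if_pos rfl, if_neg j.succ_ne_zero, zero_add, Nat.add_sub_cancel]
    simp only [List.replicate_zero, List.append_nil]
    rcases List.eq_nil_or_concat u with rfl | ⟨u', a, rfl⟩
    · rw [show sh ([] : List α) (List.replicate (j+1) b) = {List.replicate (j+1) b} from by
        simp [sh]]
      rw [show sh ([] : List α) (List.replicate j b) = {List.replicate j b} from by simp [sh]]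
      rw [List.replicate_succ' (n := j) (a := b), Multiset.count_singleton, Multiset.count_singleton]
      by_cases hw : w = List.replicate j b
      · subst hw; simp
      · rw [if_neg (fun hc => hw (by simpa using hc)), if_neg hw]
    · rw [List.concat_eq_append] at hu ⊢
      have hab : a ≠ b := by
        intro h; exact hu (by rw [h, List.getLast?_concat])
      rw [List.replicate_succ' (n := j) (a := b), sh_concat, Multiset.count_add,
        count_concat_map_ne hab,
        Multiset.count_map_eq_count' _ _ (appendb_inj b), zero_add]
  | m + 1, 0 =>
    rw [if_neg m.succ_ne_zero, if_pos rfl, add_zero, Nat.add_sub_cancel]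
    simp only [List.replicate_zero, sh_nil_right]
    rw [List.replicate_succ' (n := m) (a := b), ← List.append_assoc, Multiset.count_singleton,
      Multiset.count_singleton]
    by_cases hw : w = u ++ List.replicate m b
    · subst hw; simp
    · have h1 : w ++ [b] ≠ u ++ List.replicate m b ++ [b] := fun hc => hw (appendb_inj b hc)
      rw [if_neg h1, if_neg hw]
  | m + 1, j + 1 =>
    rw [if_neg m.succ_ne_zero, if_neg j.succ_ne_zero, Nat.add_sub_cancel,
      Nat.add_sub_cancel, List.replicate_succ' (n := m) (a := b), List.replicate_succ' (n := j) (a := b),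
      ← List.append_assoc, sh_concat, Multiset.count_add,
      Multiset.count_map_eq_count' _ _ (appendb_inj b),
      Multiset.count_map_eq_count' _ _ (appendb_inj b), ← List.replicate_succ' (n := j) (a := b)]

/-- The shuffle product of two words as an element of the free algebra
(with ℤ coefficients, words as basis). -/
noncomputable def shZ {α : Type*} [DecidableEq α] (u v : List α) : List α →₀ ℤ :=
  (Multiset.toFinsupp (sh u v)).mapRange Int.ofNat rfl

lemma shZ_apply {α : Type*} [DecidableEq α] (u v x : List α) :
    shZ u v x = ((sh u v).count x : ℤ) := by
  simp [shZ, Finsupp.mapRange_apply, Multiset.toFinsupp_apply]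

/-- The regularization map: `reg^b(w_b x_b^n) = Σ_{j=0}^n (−1)^j (w_b x_b^{n−j}) ⧢ x_b^j`,
where `x_b^j = x_b^{⧢ j}/j!` is the `j`-th power of the letter `x_b`. -/
noncomputable def regb {α : Type*} [DecidableEq α] (b : α) (wb : List α) (n : ℕ) :
    List α →₀ ℤ :=
  ∑ j ∈ Finset.range (n + 1),
    ((-1 : ℤ) ^ j) • shZ (wb ++ List.replicate (n - j) b) (List.replicate j b)

/-- If the word `w_b` does not end in the letter `b`, then `reg^b(w_b x_b^n)` lies in
`A^b`, the span of the empty word and the words not ending in `x_b`. -/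
theorem regb_mem {α : Type*} [DecidableEq α] (b : α) (wb : List α) (n : ℕ)
    (hwb : wb.getLast? ≠ some b) :
    ∀ u ∈ (regb b wb n).support, u = [] ∨ u.getLast? ≠ some b := by

  intro u hu
  by_contra hcon
  push_neg at hcon
  obtain ⟨hne, hlast⟩ := hcon
  rcases List.eq_nil_or_concat u with rfl | ⟨w, a, rfl⟩
  · exact hne rfl
  rw [List.concat_eq_append] at hu hlast
  have hab : a = b := by simpa [List.getLast?_concat] using hlast
  subst hab
  rw [Finsupp.mem_support_iff] at hu
  apply hu
  rw [regb, Finsupp.finset_sum_apply]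
  have step : ∀ j ∈ Finset.range (n + 1),
      ((-1 : ℤ) ^ j • shZ (wb ++ List.replicate (n - j) a) (List.replicate j a)) (w ++ [a]) =
      (-1 : ℤ) ^ j * (if n - j = 0 then 0 else
          ((sh (wb ++ List.replicate (n - j - 1) a) (List.replicate j a)).count w : ℤ))
      + (-1 : ℤ) ^ j * (if j = 0 then 0 else
          ((sh (wb ++ List.replicate (n - j) a) (List.replicate (j - 1) a)).count w : ℤ)) := by
    intro j _
    rw [Finsupp.smul_apply, shZ_apply, count_key a wb hwb, smul_eq_mul]
    push_cast [apply_ite (fun k : ℕ => (k : ℤ))]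
    ring
  rw [Finset.sum_congr rfl step, Finset.sum_add_distrib]
  have h1 : ∑ j ∈ Finset.range (n + 1), (-1 : ℤ) ^ j * (if n - j = 0 then 0 else
      ((sh (wb ++ List.replicate (n - j - 1) a) (List.replicate j a)).count w : ℤ)) =
      ∑ j ∈ Finset.range n, (-1 : ℤ) ^ j *
        ((sh (wb ++ List.replicate (n - (j + 1)) a) (List.replicate j a)).count w : ℤ) := by
    rw [Finset.sum_range_succ, Nat.sub_self, if_pos rfl, mul_zero, add_zero]
    refine Finset.sum_congr rfl fun j hj => ?_
    rw [Finset.mem_range] at hj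
    rw [if_neg (by omega), Nat.sub_sub]
  have h2 : ∑ j ∈ Finset.range (n + 1), (-1 : ℤ) ^ j * (if j = 0 then 0 else
      ((sh (wb ++ List.replicate (n - j) a) (List.replicate (j - 1) a)).count w : ℤ)) =
      ∑ j ∈ Finset.range n, -((-1 : ℤ) ^ j *
        ((sh (wb ++ List.replicate (n - (j + 1)) a) (List.replicate j a)).count w : ℤ)) := by
    rw [Finset.sum_range_succ', if_pos rfl, mul_zero, add_zero]
    refine Finset.sum_congr rfl fun j hj => ?_
    rw [if_neg (Nat.succ_ne_zero j), Nat.add_sub_cancel, pow_succ]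
    ring
  rw [h1, h2, ← Finset.sum_add_distrib]
  exact Finset.sum_eq_zero fun j _ => by ring
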